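/- arXiv:0904.0200 — 4 statements merged into one kernel-verified Lean document; each statement's English description precedes it below -/
import Mathlib

section
/- Let N ≥ 2 and let B be an N×N skew-symmetric integer matrix such that node 1 is a sink of B. Then μ₁(B) = ρ B ρ⁻¹ (i.e. B has mutation period 1) if and only if τ B τ⁻¹ = B. -/
open Matrix

/-- The cyclic permutation matrix ρ: ρ_{i+1,i} = 1 (1-based), ρ_{1,N} = 1. -/
def rhoM (N : ℕ) : Matrix (Fin N) (Fin N) ℤ :=
  Matrix.of fun i j => if (i : ℕ) = ((j : ℕ) + 1) % N then 1 else 0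

/-- The skew-rotation τ: equal to ρ except τ_{1,N} = −1. -/
def tauM (N : ℕ) : Matrix (Fin N) (Fin N) ℤ :=
  Matrix.of fun i j =>
    if (i : ℕ) = ((j : ℕ) + 1) % N then (if (j : ℕ) + 1 = N then -1 else 1) else 0

/-- Fomin–Zelevinsky matrix mutation at node `k`. -/
def mutB {N : ℕ} (k : Fin N) (B : Matrix (Fin N) (Fin N) ℤ) : Matrix (Fin N) (Fin N) ℤ :=
  Matrix.of fun i j =>
    if i = k ∨ j = k then -B i j
    else B i j + (|B i k| * B k j + B i k * |B k j|) / 2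

/-- Node `k` is a sink of `B` if all entries of column `k` are nonnegative. -/
def IsSink {N : ℕ} (k : Fin N) (B : Matrix (Fin N) (Fin N) ℤ) : Prop :=
  ∀ i, 0 ≤ B i k

def epsZ {N : ℕ} [NeZero N] (i : Fin N) : ℤ := if i = 0 then -1 else 1

section aux
variable {N : ℕ} [NeZero N]

lemma val_add_one (hN : 2 ≤ N) (j : Fin N) : ((j+1 : Fin N) : ℕ) = ((j:ℕ)+1) % N := by
  rw [Fin.add_def, Fin.val_one', Nat.mod_eq_of_lt (show 1 < N by omega)]

lemma cond_iff (hN : 2 ≤ N) (i j : Fin N) : ((i : ℕ) = ((j:ℕ)+1) % N) ↔ j = i - 1 := by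
  rw [← val_add_one hN, ← Fin.ext_iff, eq_comm]
  exact eq_sub_iff_add_eq.symm

lemma rho_apply (hN : 2 ≤ N) (i j : Fin N) :
    rhoM N i j = if j = i - 1 then 1 else 0 := by
  simp only [rhoM, of_apply, cond_iff hN]

lemma sign_iff (hN : 2 ≤ N) (i j : Fin N) (h : j = i - 1) : ((j:ℕ)+1 = N) ↔ i = 0 := by
  have h' : (i : ℕ) = ((j:ℕ)+1) % N := (cond_iff hN i j).2 h
  have hj := j.isLt
  rcases Nat.lt_or_ge ((j:ℕ)+1) N with h1 | h1
  · rw [Nat.mod_eq_of_lt h1] at h'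
    constructor <;> intro hh
    · omega
    · rw [hh] at h'; simp at h'
  · have h2 : (j:ℕ)+1 = N := by omega
    rw [h2, Nat.mod_self] at h'
    exact ⟨fun _ => Fin.ext (by rw [h']; simp), fun _ => h2⟩

lemma tau_apply (hN : 2 ≤ N) (i j : Fin N) :
    tauM N i j = epsZ i * (if j = i - 1 then 1 else 0) := by
  simp only [tauM, of_apply, cond_iff hN, epsZ]
  by_cases h : j = i - 1
  · rw [if_pos h, if_pos h, mul_one]; simp only [sign_iff hN i j h]
  · rw [if_neg h, if_neg h, mul_zero]

lemma conj_rho (hN : 2 ≤ N) (B : Matrix (Fin N) (Fin N) ℤ) (i j : Fin N) :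
    (rhoM N * B * (rhoM N)ᵀ) i j = B (i-1) (j-1) := by
  simp [Matrix.mul_apply, rho_apply hN, transpose_apply, ite_mul, mul_ite,
    Finset.sum_ite_eq, Finset.sum_ite_eq']

lemma conj_tau (hN : 2 ≤ N) (B : Matrix (Fin N) (Fin N) ℤ) (i j : Fin N) :
    (tauM N * B * (tauM N)ᵀ) i j = epsZ i * epsZ j * B (i-1) (j-1) := by
  simp [Matrix.mul_apply, tau_apply hN, transpose_apply, ite_mul, mul_ite,
    Finset.sum_ite_eq, Finset.sum_ite_eq', Finset.mul_sum, Finset.sum_mul]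
  ring

lemma rho_right_inv (hN : 2 ≤ N) : rhoM N * (rhoM N)ᵀ = 1 := by
  ext i j
  simp [Matrix.mul_apply, rho_apply hN, transpose_apply, ite_mul, mul_ite,
    Finset.sum_ite_eq, Finset.sum_ite_eq', Matrix.one_apply, sub_left_inj, eq_comm]

lemma tau_right_inv (hN : 2 ≤ N) : tauM N * (tauM N)ᵀ = 1 := by
  ext i j
  have key : ∀ k : Fin N, tauM N i k * tauM N j k =
      epsZ i * epsZ j * ((if k = i-1 then (1:ℤ) else 0) * (if k = j-1 then 1 else 0)) :=
    fun k => by rw [tau_apply hN, tau_apply hN]; ring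
  simp only [Matrix.mul_apply, transpose_apply, key]
  rw [← Finset.mul_sum]
  simp only [ite_mul, one_mul, zero_mul, Finset.sum_ite_eq', Finset.mem_univ, if_true,
    Matrix.one_apply, sub_left_inj]
  by_cases h : i = j <;> by_cases hi : i = 0 <;> simp_all [epsZ]

end aux

lemma mut_apply {N : ℕ} [NeZero N] (hN : 2 ≤ N) (h0 : 0 < N) (B : Matrix (Fin N) (Fin N) ℤ)
    (hskew : Bᵀ = -B) (hsink : IsSink ⟨0, h0⟩ B) (i j : Fin N) :
    mutB ⟨0, h0⟩ B i j = epsZ i * epsZ j * B i j := by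
  have hmk : (⟨0, h0⟩ : Fin N) = 0 := by ext; simp
  have hBskew : ∀ a b : Fin N, B a b = - B b a := fun a b => by
    have := congrFun (congrFun hskew b) a
    simpa using this
  have hsink' : ∀ a : Fin N, 0 ≤ B a 0 := fun a => (hsink a).trans_eq (by rw [hmk])
  simp only [mutB, of_apply, hmk]
  by_cases hi : i = 0 <;> by_cases hj : j = 0
  · subst hi; subst hj
    have hz : B 0 0 = 0 := by have := hBskew 0 0; omega
    simp [epsZ, hz]
  · subst hi; simp [epsZ, hj]
  · subst hj; simp [epsZ, hi]
  · have h1 : |B i 0| = B i 0 := abs_of_nonneg (hsink' i)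
    have h2 : B 0 j = - B j 0 := hBskew 0 j
    have h3 : |B 0 j| = - B 0 j := abs_of_nonpos (by rw [h2]; simpa using hsink' j)
    have h4 : B i 0 * B 0 j + B i 0 * -B 0 j = 0 := by ring
    simp [hi, hj, h1, h3, h4, epsZ]

theorem stmt0 (N : ℕ) (hN : 2 ≤ N) (B : Matrix (Fin N) (Fin N) ℤ)
    (hskew : Bᵀ = -B) (hsink : IsSink ⟨0, by omega⟩ B) :
    mutB ⟨0, by omega⟩ B = rhoM N * B * (rhoM N)⁻¹ ↔ tauM N * B * (tauM N)⁻¹ = B := by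
  haveI : NeZero N := ⟨by omega⟩
  rw [Matrix.inv_eq_right_inv (rho_right_inv hN), Matrix.inv_eq_right_inv (tau_right_inv hN)]
  have heps : ∀ i : Fin N, epsZ i * epsZ i = 1 := fun i => by
    by_cases h : i = 0 <;> simp [epsZ, h]
  constructor
  · intro h; ext i j
    have h1 := Matrix.ext_iff.2 h i j
    rw [mut_apply hN (by omega) B hskew hsink, conj_rho hN] at h1
    rw [conj_tau hN, ← h1]
    calc epsZ i * epsZ j * (epsZ i * epsZ j * B i j)
        = (epsZ i * epsZ i) * (epsZ j * epsZ j) * B i j := by ring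
      _ = B i j := by rw [heps, heps, one_mul, one_mul]
  · intro h; ext i j
    have h1 := Matrix.ext_iff.2 h i j
    rw [conj_tau hN] at h1
    rw [mut_apply hN (by omega) B hskew hsink, conj_rho hN, ← h1]
    calc epsZ i * epsZ j * (epsZ i * epsZ j * B (i-1) (j-1))
        = (epsZ i * epsZ i) * (epsZ j * epsZ j) * B (i-1) (j-1) := by ring
      _ = B (i-1) (j-1) := by rw [heps, heps, one_mul, one_mul]
end

section
/- (a) Let M be an N×N real skew-symmetric matrix with M_{ij} ≥ 0 whenever i ≥ j. Then τ M τ⁻¹ also satisfies (τ M τ⁻¹)_{ij} ≥ 0 whenever i ≥ j. (b) Consequently, for N = 2r every period 2 primitive B_{N,2}^{(k,l)} (1 ≤ k ≤ r−1 and l ∈ {1,2}, and also k = r when 4 | N) has nonnegative entries below the leading diagonal. -/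
open Matrix

/-- The skew-rotation τ as a real matrix. -/
def tauR (N : ℕ) : Matrix (Fin N) (Fin N) ℝ :=
  Matrix.of fun i j =>
    if (i : ℕ) = ((j : ℕ) + 1) % N then (if (j : ℕ) + 1 = N then -1 else 1) else 0

/-- The matrix `R_N^(k)`: entry `(N−k+1, 1)` (1-based) equal to 1,
entry `(1, N−k+1)` equal to −1, all other entries 0. -/
def RM (N k : ℕ) : Matrix (Fin N) (Fin N) ℤ :=
  Matrix.of fun i j =>
    if (i : ℕ) = N - k ∧ (j : ℕ) = 0 then 1
    else if (i : ℕ) = 0 ∧ (j : ℕ) = N - k then -1 else 0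

/-- The first period 2 primitive `B_{N,2}^(k,1)` with `t` terms:
`Σ_{i=0}^{t−1} τ^{2i} R_N^(k) τ^{−2i}`. -/
noncomputable def B2p1 (N k t : ℕ) : Matrix (Fin N) (Fin N) ℤ :=
  ∑ i ∈ Finset.range t, (tauM N) ^ (2 * i) * RM N k * ((tauM N)⁻¹) ^ (2 * i)

/-- The second period 2 primitive `B_{N,2}^(k,2) := τ B_{N,2}^(k,1) τ⁻¹`. -/
noncomputable def B2p2 (N k t : ℕ) : Matrix (Fin N) (Fin N) ℤ :=
  tauM N * B2p1 N k t * (tauM N)⁻¹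

variable {R : Type*} [CommRing R] [LinearOrder R] [IsStrictOrderedRing R]

def tauG (R : Type*) [CommRing R] [LinearOrder R] [IsStrictOrderedRing R] (N : ℕ) : Matrix (Fin N) (Fin N) R :=
  Matrix.of fun i j =>
    if (i : ℕ) = ((j : ℕ) + 1) % N then (if (j : ℕ) + 1 = N then -1 else 1) else 0

lemma tauG_apply {N : ℕ} [NeZero N] (i j : Fin N) :
    tauG R N i j = if j = i - 1 then (if (j : ℕ) + 1 = N then (-1:R) else 1) else 0 := by
  have h1 : ((j + 1 : Fin N) : ℕ) = ((j:ℕ)+1) % N := by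
    simp [Fin.add_def, Fin.val_one', Nat.add_mod]
  have h2 : ((i : ℕ) = ((j : ℕ) + 1) % N) ↔ (j = i - 1) := by
    rw [← h1]
    constructor
    · intro h; have : i = j + 1 := Fin.ext h; simp [this]
    · intro h; simp [h]
  simp [tauG, h2]

lemma tauG_mul_transpose {N : ℕ} [NeZero N] : tauG R N * (tauG R N)ᵀ = 1 := by
  ext i j
  rw [Matrix.mul_apply]
  simp only [transpose_apply]
  rw [Finset.sum_eq_single (i - 1)]
  · rw [tauG_apply, tauG_apply, if_pos rfl]
    rcases eq_or_ne i j with rfl | hne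
    · rw [if_pos rfl, Matrix.one_apply_eq]
      split_ifs <;> norm_num
    · have hne' : ¬ ((i - 1 : Fin N) = j - 1) := fun h => hne (sub_left_inj.mp h)
      rw [if_neg hne', mul_zero, Matrix.one_apply_ne hne]
  · intro b _ hb; rw [tauG_apply, if_neg hb, zero_mul]
  · simp

lemma transpose_mul_tauG {N : ℕ} [NeZero N] : (tauG R N)ᵀ * tauG R N = 1 := by
  ext i j
  rw [Matrix.mul_apply]
  simp only [transpose_apply]
  rw [Finset.sum_eq_single (i + 1)]
  · rw [tauG_apply, tauG_apply]
    have h1 : (i : Fin N) = i + 1 - 1 := by simp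
    rw [if_pos h1]
    rcases eq_or_ne i j with rfl | hne
    · rw [if_pos h1, Matrix.one_apply_eq]
      split_ifs <;> norm_num
    · have h2 : ¬ ((j : Fin N) = i + 1 - 1) := by
        simpa using Ne.symm hne
      rw [if_neg h2, mul_zero, Matrix.one_apply_ne hne]
  · intro b _ hb
    have : ¬ ((i : Fin N) = b - 1) := fun h => hb (eq_sub_iff_add_eq.mp h).symm
    rw [tauG_apply, if_neg this, zero_mul]
  · simp

lemma tauG_inv {N : ℕ} [NeZero N] : (tauG R N)⁻¹ = (tauG R N)ᵀ :=
  Matrix.inv_eq_right_inv tauG_mul_transpose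

lemma conj_apply {N : ℕ} [NeZero N] (M : Matrix (Fin N) (Fin N) R) (i j : Fin N) :
    (tauG R N * M * (tauG R N)ᵀ) i j =
      ((if (i:ℕ) = 0 then (-1:R) else 1) * (if (j:ℕ) = 0 then (-1:R) else 1)) *
        M (i - 1) (j - 1) := by
  have hs : ∀ a : Fin N, (((a - 1 : Fin N) : ℕ) + 1 = N) ↔ ((a : ℕ) = 0) := by
    intro a
    rcases Nat.exists_eq_succ_of_ne_zero (NeZero.ne N) with ⟨n, rfl⟩
    rw [Fin.coe_sub_one]
    rcases eq_or_ne a 0 with rfl | h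
    · simp
    · simp only [if_neg h]
      have h1 : 0 < (a : ℕ) := Fin.pos_iff_ne_zero.mpr h
      have h2 : (a : ℕ) < n + 1 := a.isLt
      omega
  have hrow : ∀ b : Fin N, (tauG R N * M) i b =
      (if (i:ℕ) = 0 then (-1:R) else 1) * M (i - 1) b := by
    intro b
    rw [Matrix.mul_apply]
    rw [Finset.sum_eq_single (i - 1)]
    · rw [tauG_apply, if_pos rfl]
      simp only [hs]
    · intro a _ ha; rw [tauG_apply, if_neg ha, zero_mul]
    · simp
  rw [Matrix.mul_apply]
  rw [Finset.sum_eq_single (j - 1)]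
  · rw [transpose_apply, tauG_apply, if_pos rfl, hrow]
    simp only [hs]
    ring
  · intro b _ hb; rw [transpose_apply, tauG_apply, if_neg hb, mul_zero]
  · simp

lemma key {N : ℕ} [NeZero N] (M : Matrix (Fin N) (Fin N) R) (hskew : Mᵀ = -M)
    (hpos : ∀ i j : Fin N, (j : ℕ) ≤ (i : ℕ) → 0 ≤ M i j) :
    (tauG R N * M * (tauG R N)ᵀ)ᵀ = -(tauG R N * M * (tauG R N)ᵀ) ∧
    (∀ i j : Fin N, (j : ℕ) ≤ (i : ℕ) → 0 ≤ (tauG R N * M * (tauG R N)ᵀ) i j) := by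
  have hM : ∀ a b : Fin N, M a b = - M b a := by
    intro a b
    have h := congrFun (congrFun hskew b) a
    simpa using h
  constructor
  · rw [transpose_mul, transpose_mul, transpose_transpose, hskew]
    simp [Matrix.neg_mul, Matrix.mul_neg, Matrix.mul_assoc]
  · intro i j hij
    rw [conj_apply]
    rcases eq_or_ne (i:ℕ) 0 with hi | hi
    · have hj : (j:ℕ) = 0 := by omega
      have hij0 : i = j := Fin.ext (by omega)
      subst hij0
      have hd := hM (i-1) (i-1)
      have hd0 : M (i-1) (i-1) = 0 := by linarith
      simp [hi, hd0]
    · rcases eq_or_ne (j:ℕ) 0 with hj | hj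
      · rw [if_neg hi, if_pos hj, hM (i-1) (j-1)]
        have hle : ((i - 1 : Fin N) : ℕ) ≤ ((j - 1 : Fin N) : ℕ) := by
          rcases Nat.exists_eq_succ_of_ne_zero (NeZero.ne N) with ⟨n, rfl⟩
          rw [Fin.coe_sub_one, Fin.coe_sub_one]
          have hi' : ¬ (i = 0) := fun h => hi (by simp [h])
          have hj' : (j = 0) := Fin.ext hj
          have : (i:ℕ) < n + 1 := i.isLt
          simp only [if_neg hi', if_pos hj']
          omega
        have := hpos (j-1) (i-1) hle
        nlinarith
      · rw [if_neg hi, if_neg hj, one_mul, one_mul]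
        apply hpos
        rcases Nat.exists_eq_succ_of_ne_zero (NeZero.ne N) with ⟨n, rfl⟩
        rw [Fin.coe_sub_one, Fin.coe_sub_one]
        have hi' : ¬ (i = 0) := fun h => hi (by simp [h])
        have hj' : ¬ (j = 0) := fun h => hj (by simp [h])
        simp only [if_neg hi', if_neg hj']
        omega


lemma RM_skew {N k : ℕ} (h1 : 1 ≤ k) (h2 : k < N) : (RM N k)ᵀ = -(RM N k) := by
  have hk : 0 < N - k := by omega
  ext i j
  simp only [RM, Matrix.transpose_apply, Matrix.of_apply, Matrix.neg_apply]
  split_ifs <;> omega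

lemma RM_pos {N k : ℕ} (h1 : 1 ≤ k) (h2 : k < N) :
    ∀ i j : Fin N, (j:ℕ) ≤ (i:ℕ) → 0 ≤ RM N k i j := by
  have hk : 0 < N - k := by omega
  intro i j hij
  simp only [RM, Matrix.of_apply]
  split_ifs <;> omega

lemma tau_conj_pow {N : ℕ} [NeZero N] (A : Matrix (Fin N) (Fin N) ℤ) (hA : Aᵀ = -A)
    (hpos : ∀ i j : Fin N, (j:ℕ) ≤ (i:ℕ) → 0 ≤ A i j) (m : ℕ) :
    ((tauG ℤ N)^m * A * ((tauG ℤ N)ᵀ)^m)ᵀ = -((tauG ℤ N)^m * A * ((tauG ℤ N)ᵀ)^m) ∧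
    (∀ i j : Fin N, (j:ℕ) ≤ (i:ℕ) → 0 ≤ ((tauG ℤ N)^m * A * ((tauG ℤ N)ᵀ)^m) i j) := by
  induction m with
  | zero => simpa using ⟨hA, hpos⟩
  | succ m ih =>
    have e : (tauG ℤ N)^(m+1) * A * ((tauG ℤ N)ᵀ)^(m+1)
        = tauG ℤ N * ((tauG ℤ N)^m * A * ((tauG ℤ N)ᵀ)^m) * (tauG ℤ N)ᵀ := by
      rw [pow_succ', pow_succ]
      simp only [Matrix.mul_assoc]
    rw [e]
    exact key _ ih.1 ih.2

lemma Bpos {N : ℕ} [NeZero N] (k t : ℕ) (h1 : 1 ≤ k) (h2 : k < N) :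
    (∀ i j : Fin N, (j:ℕ) ≤ (i:ℕ) → 0 ≤ B2p1 N k t i j) ∧
    (∀ i j : Fin N, (j:ℕ) ≤ (i:ℕ) → 0 ≤ B2p2 N k t i j) := by
  have htau : tauM N = tauG ℤ N := rfl
  have hB1 : B2p1 N k t =
      ∑ m ∈ Finset.range t, (tauG ℤ N)^(2*m) * RM N k * ((tauG ℤ N)ᵀ)^(2*m) := by
    simp only [B2p1, htau, tauG_inv]
  have hskew : (B2p1 N k t)ᵀ = -(B2p1 N k t) := by
    rw [hB1, Matrix.transpose_sum, ← Finset.sum_neg_distrib]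
    exact Finset.sum_congr rfl fun m _ => (tau_conj_pow _ (RM_skew h1 h2) (RM_pos h1 h2) (2*m)).1
  have hpos : ∀ i j : Fin N, (j:ℕ) ≤ (i:ℕ) → 0 ≤ B2p1 N k t i j := by
    intro i j hij
    rw [hB1, Matrix.sum_apply]
    exact Finset.sum_nonneg fun m _ =>
      (tau_conj_pow _ (RM_skew h1 h2) (RM_pos h1 h2) (2*m)).2 i j hij
  refine ⟨hpos, ?_⟩
  have hB2 : B2p2 N k t = tauG ℤ N * B2p1 N k t * (tauG ℤ N)ᵀ := by
    simp only [B2p2, htau, tauG_inv]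
  rw [hB2]
  exact (key _ hskew hpos).2

/-- (a) Conjugation by τ preserves the property of a real skew-symmetric matrix that
all entries on or below the diagonal are nonnegative; (b) consequently all period 2
primitives have nonnegative entries below the leading diagonal. -/
theorem stmt4 (N : ℕ) :
    (∀ M : Matrix (Fin N) (Fin N) ℝ, Mᵀ = -M →
      (∀ i j : Fin N, (j : ℕ) ≤ (i : ℕ) → 0 ≤ M i j) →
      ∀ i j : Fin N, (j : ℕ) ≤ (i : ℕ) → 0 ≤ (tauR N * M * (tauR N)⁻¹) i j) ∧
    (∀ r : ℕ, N = 2 * r →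
      (∀ k, 1 ≤ k → k ≤ r - 1 →
        (∀ i j : Fin N, (j : ℕ) ≤ (i : ℕ) → 0 ≤ B2p1 N k r i j) ∧
        (∀ i j : Fin N, (j : ℕ) ≤ (i : ℕ) → 0 ≤ B2p2 N k r i j)) ∧
      (4 ∣ N →
        (∀ i j : Fin N, (j : ℕ) ≤ (i : ℕ) → 0 ≤ B2p1 N r (r / 2) i j) ∧
        (∀ i j : Fin N, (j : ℕ) ≤ (i : ℕ) → 0 ≤ B2p2 N r (r / 2) i j))) := by
  rcases Nat.eq_zero_or_pos N with hN | hN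
  · subst hN
    exact ⟨fun M _ _ i => i.elim0,
      fun r hr => ⟨fun k hk1 hk2 => ⟨fun i => i.elim0, fun i => i.elim0⟩,
        fun _ => ⟨fun i => i.elim0, fun i => i.elim0⟩⟩⟩
  · haveI : NeZero N := ⟨by omega⟩
    have htR : tauR N = tauG ℝ N := rfl
    constructor
    · intro M hskew hpos i j hij
      rw [htR, tauG_inv]
      exact (key M hskew hpos).2 i j hij
    · intro r hr
      constructor
      · intro k hk1 hk2
        exact Bpos k r hk1 (by omega)
      · intro h4
        rcases h4 with ⟨c, hc⟩
        exact Bpos r (r/2) (by omega) (by omega)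
end

section
/- Let N ≥ 2, m ≥ 1, and let B be an N×N skew-symmetric integer matrix. Set B(1) = B and B(i+1) = μ_i(B(i)) for 1 ≤ i ≤ m, and suppose that node i is a sink of B(i) for i = 1, 2, …, m. Then B(m+1) = ρ^m B ρ^{−m} (i.e. B has mutation period m) if and only if τ^m B τ^{−m} = B. -/
open Matrix

/-- Mutation at node `i+1` (1-based), i.e. at the vertex with 0-based index `i % N`. -/
def mutAt (N : ℕ) (i : ℕ) (B : Matrix (Fin N) (Fin N) ℤ) : Matrix (Fin N) (Fin N) ℤ :=
  if h : 0 < N then mutB ⟨i % N, Nat.mod_lt _ h⟩ B else B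

/-- The chain of mutations `B(1), B(2), …` (0-based: `mutChain B i = B(i+1)`),
where `B(1) = B` and `B(i+1) = μ_i(B(i))`. -/
def mutChain {N : ℕ} (B : Matrix (Fin N) (Fin N) ℤ) : ℕ → Matrix (Fin N) (Fin N) ℤ
  | 0 => B
  | i + 1 => mutAt N i (mutChain B i)

/-! ### Helpers -/

open scoped Fin.CommRing
def shiftMat (n : ℕ) (c : Fin (n+2)) (s : Fin (n+2) → ℤ) : Matrix (Fin (n+2)) (Fin (n+2)) ℤ :=
  Matrix.of fun i j => if i = j + c then s j else 0

lemma shift_congr (n : ℕ) {c c' : Fin (n+2)} {s s' : Fin (n+2) → ℤ}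
    (hc : c = c') (hs : ∀ j, s j = s' j) : shiftMat n c s = shiftMat n c' s' := by
  subst hc; ext i j; simp only [shiftMat, Matrix.of_apply, hs]

lemma shift_mul (n : ℕ) (c : Fin (n+2)) (s : Fin (n+2) → ℤ)
    (X : Matrix (Fin (n+2)) (Fin (n+2)) ℤ) (i j : Fin (n+2)) :
    (shiftMat n c s * X) i j = s (i - c) * X (i - c) j := by
  rw [Matrix.mul_apply, Finset.sum_eq_single (i - c)]
  · simp [shiftMat]
  · intro k _ hk
    simp only [shiftMat, Matrix.of_apply]
    rw [if_neg, zero_mul]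
    intro h; exact hk (by rw [h]; ring)
  · simp

lemma mul_shift (n : ℕ) (d : Fin (n+2)) (t : Fin (n+2) → ℤ)
    (X : Matrix (Fin (n+2)) (Fin (n+2)) ℤ) (i j : Fin (n+2)) :
    (X * shiftMat n d t) i j = X i (j + d) * t j := by
  rw [Matrix.mul_apply, Finset.sum_eq_single (j + d)]
  · simp [shiftMat]
  · intro k _ hk
    simp only [shiftMat, Matrix.of_apply]
    rw [if_neg hk, mul_zero]
  · simp

lemma shift_conj (n : ℕ) (c d : Fin (n+2)) (s t : Fin (n+2) → ℤ)
    (X : Matrix (Fin (n+2)) (Fin (n+2)) ℤ) (i j : Fin (n+2)) :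
    (shiftMat n c s * X * shiftMat n d t) i j = s (i - c) * X (i - c) (j + d) * t j := by
  rw [mul_shift, shift_mul]

lemma shift_mul_shift (n : ℕ) (c d : Fin (n+2)) (s t : Fin (n+2) → ℤ) :
    shiftMat n c s * shiftMat n d t = shiftMat n (c + d) (fun j => s (j + d) * t j) := by
  ext i j
  rw [mul_shift]
  simp only [shiftMat, Matrix.of_apply]
  by_cases h : i = j + (c + d)
  · rw [if_pos (by rw [h]; ring), if_pos h]
  · rw [if_neg (by intro h'; exact h (by rw [h']; ring)), if_neg h, zero_mul]

lemma shift_zero_one (n : ℕ) : shiftMat n 0 (fun _ => 1) = 1 := by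
  ext i j
  simp [shiftMat, Matrix.one_apply, eq_comm]

lemma shift_pow (n : ℕ) (c : Fin (n+2)) (s : Fin (n+2) → ℤ) (m : ℕ) :
    (shiftMat n c s) ^ m
      = shiftMat n ((m : Fin (n+2)) * c)
          (fun j => ∏ t ∈ Finset.range m, s (j + (t : Fin (n+2)) * c)) := by
  induction m with
  | zero => simpa using (shift_zero_one n).symm
  | succ k ih =>
    rw [pow_succ, ih, shift_mul_shift]
    refine shift_congr n (by push_cast; ring) (fun j => ?_)
    rw [Finset.prod_range_succ']
    simp only [Nat.cast_zero, zero_mul, add_zero]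
    congr 1
    refine Finset.prod_congr rfl (fun t _ => ?_)
    congr 1
    push_cast
    ring

lemma fin_add_one_iff (n : ℕ) (i j : Fin (n+2)) :
    ((i : ℕ) = ((j : ℕ) + 1) % (n+2)) ↔ i = j + 1 := by
  rw [Fin.ext_iff, Fin.val_add, Fin.val_one]

lemma rho_eq (n : ℕ) : rhoM (n+2) = shiftMat n 1 (fun _ => 1) := by
  ext i j
  simp only [rhoM, shiftMat, Matrix.of_apply, fin_add_one_iff]

def tauSgn (n : ℕ) (j : Fin (n+2)) : ℤ := if j = -1 then -1 else 1

lemma tauSgn_sq (n : ℕ) (j : Fin (n+2)) : tauSgn n j * tauSgn n j = 1 := by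
  unfold tauSgn; split <;> norm_num

lemma tau_eq (n : ℕ) : tauM (n+2) = shiftMat n 1 (tauSgn n) := by
  ext i j
  simp only [tauM, shiftMat, Matrix.of_apply, fin_add_one_iff, tauSgn]
  congr 1
  have : ((j:ℕ) + 1 = n + 2) ↔ (j = -1) := by
    rw [Fin.ext_iff, Fin.coe_neg_one]; omega
  simp only [this]

lemma rho_inv (n : ℕ) : (rhoM (n+2))⁻¹ = shiftMat n (-1) (fun _ => 1) := by
  apply Matrix.inv_eq_right_inv
  rw [rho_eq, shift_mul_shift]
  simpa using shift_zero_one n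

lemma tau_inv (n : ℕ) : (tauM (n+2))⁻¹ = shiftMat n (-1) (fun j => tauSgn n (j - 1)) := by
  apply Matrix.inv_eq_right_inv
  rw [tau_eq, shift_mul_shift]
  rw [show (1 + -1 : Fin (n+2)) = 0 by ring, ← shift_zero_one n]
  refine shift_congr n rfl (fun j => ?_)
  rw [show j + -1 = j - 1 by ring]
  exact tauSgn_sq n (j - 1)

def eSgn (n m : ℕ) (i : Fin (n+2)) : ℤ :=
  ∏ t ∈ Finset.range m, (if (t : Fin (n+2)) = i then -1 else 1)

lemma eSgn_sq (n m : ℕ) (i : Fin (n+2)) : eSgn n m i * eSgn n m i = 1 := by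
  unfold eSgn
  rw [← Finset.prod_mul_distrib]
  exact Finset.prod_eq_one (fun t _ => by split <;> norm_num)

def fSgn (n m : ℕ) (i : Fin (n+2)) : ℤ :=
  ∏ t ∈ Finset.range m, tauSgn n (i + (t : Fin (n+2)))

lemma fSgn_sq (n m : ℕ) (i : Fin (n+2)) : fSgn n m i * fSgn n m i = 1 := by
  unfold fSgn
  rw [← Finset.prod_mul_distrib]
  exact Finset.prod_eq_one (fun t _ => tauSgn_sq n _)

lemma cast_reflect (n m t : ℕ) (h : t < m) :
    ((m - 1 - t : ℕ) : Fin (n+2)) = (m : Fin (n+2)) - 1 - (t : Fin (n+2)) := by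
  rw [Nat.cast_sub (by omega), Nat.cast_sub (by omega), Nat.cast_one]

/-- Key combinatorial identity: the sign accumulated by the sink mutations matches
the sign accumulated by powers of τ, after a cyclic shift. -/
lemma key_sgn (n m : ℕ) (i : Fin (n+2)) :
    eSgn n m (i + (m : Fin (n+2))) = fSgn n m i := by
  unfold eSgn fSgn
  rw [← Finset.prod_range_reflect (fun t => tauSgn n (i + (t : Fin (n+2)))) m]
  refine Finset.prod_congr rfl (fun t ht => ?_)
  rw [Finset.mem_range] at ht
  rw [cast_reflect n m t ht]
  unfold tauSgn
  have : (i + ((m : Fin (n+2)) - 1 - (t:Fin (n+2))) = -1) ↔ ((t : Fin (n+2)) = i + (m : Fin (n+2))) := by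
    constructor
    · intro h; linear_combination -h
    · intro h; linear_combination -h
  simp only [this]

lemma key_sgn' (n m : ℕ) (i : Fin (n+2)) :
    eSgn n m i = fSgn n m (i - (m : Fin (n+2))) := by
  have := key_sgn n m (i - (m : Fin (n+2)))
  rwa [sub_add_cancel] at this

/-- At a sink of a skew-symmetric matrix, mutation is just sign conjugation. -/
lemma sink_mut {n : ℕ} (k : Fin (n+2)) (C : Matrix (Fin (n+2)) (Fin (n+2)) ℤ)
    (hskew : Cᵀ = -C) (hs : IsSink k C) (i j : Fin (n+2)) :
    mutB k C i j = (if k = i then -1 else 1) * C i j * (if k = j then -1 else 1) := by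
  have hent : ∀ a b, C b a = -C a b := fun a b => by
    have := congrFun (congrFun hskew a) b
    simpa [Matrix.transpose_apply] using this
  simp only [mutB, Matrix.of_apply]
  by_cases hi : i = k <;> by_cases hj : j = k
  · rw [if_pos (Or.inl hi), if_pos hi.symm, if_pos hj.symm]
    have h0 : C i j = 0 := by rw [hi, hj]; have := hent k k; omega
    rw [h0]; ring
  · rw [if_pos (Or.inl hi), if_pos hi.symm, if_neg (fun h => hj h.symm)]
    ring
  · rw [if_pos (Or.inr hj), if_neg (fun h => hi h.symm), if_pos hj.symm]
    ring
  · have h1 : ¬(i = k ∨ j = k) := by tauto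
    rw [if_neg h1, if_neg (fun h => hi h.symm), if_neg (fun h => hj h.symm)]
    have hik : 0 ≤ C i k := hs i
    have hkj : C k j ≤ 0 := by have := hent k j; have := hs j; omega
    have hz : C i k * C k j + C i k * -C k j = 0 := by ring
    rw [abs_of_nonneg hik, abs_of_nonpos hkj, hz]
    simp

lemma natCast_fin (n q : ℕ) : (q : Fin (n+2)) = ⟨q % (n+2), Nat.mod_lt _ (by omega)⟩ :=
  Fin.ext (Fin.val_natCast q (n+2))

lemma chain_formula {n m : ℕ} (B : Matrix (Fin (n+2)) (Fin (n+2)) ℤ) (hskew : Bᵀ = -B)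
    (hsink : ∀ i < m, IsSink ⟨i % (n+2), Nat.mod_lt _ (by omega)⟩ (mutChain B i)) :
    ∀ q ≤ m, ∀ i j, mutChain B q i j = eSgn n q i * B i j * eSgn n q j := by
  intro q
  induction q with
  | zero => intro _ i j; simp [mutChain, eSgn]
  | succ p ih =>
    intro hq i j
    have ihf := ih (by omega)
    have hskewp : (mutChain B p)ᵀ = -(mutChain B p) := by
      ext a b
      have hab := congrFun (congrFun hskew b) a
      simp only [Matrix.transpose_apply, Matrix.neg_apply] at hab ⊢
      rw [ihf b a, ihf a b, hab]
      ring
    have hsinkp := hsink p (by omega)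
    have hstep : mutChain B (p+1) = mutB ⟨p % (n+2), Nat.mod_lt _ (by omega)⟩ (mutChain B p) := by
      show mutAt (n+2) p (mutChain B p) = _
      rw [mutAt, dif_pos (by omega : 0 < n+2)]
    rw [hstep, ← natCast_fin n p,
      sink_mut _ _ hskewp (by rw [natCast_fin]; exact hsinkp)]
    rw [ihf i j]
    unfold eSgn
    rw [Finset.prod_range_succ, Finset.prod_range_succ]
    ring

lemma rho_pow (n m : ℕ) :
    (shiftMat n 1 (fun _ => 1)) ^ m = shiftMat n (m : Fin (n+2)) (fun _ => 1) := by
  rw [shift_pow]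
  exact shift_congr n (by ring) (fun j => Finset.prod_const_one)

lemma rho_inv_pow (n m : ℕ) :
    (shiftMat n (-1) (fun _ => 1)) ^ m = shiftMat n (-(m : Fin (n+2))) (fun _ => 1) := by
  rw [shift_pow]
  exact shift_congr n (by ring) (fun j => Finset.prod_const_one)

lemma tau_pow (n m : ℕ) :
    (shiftMat n 1 (tauSgn n)) ^ m = shiftMat n (m : Fin (n+2)) (fSgn n m) := by
  rw [shift_pow]
  refine shift_congr n (by ring) (fun j => Finset.prod_congr rfl (fun t _ => by rw [mul_one]))

lemma tau_inv_pow (n m : ℕ) :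
    (shiftMat n (-1) (fun j => tauSgn n (j - 1))) ^ m
      = shiftMat n (-(m : Fin (n+2))) (fun j => fSgn n m (j - (m : Fin (n+2)))) := by
  rw [shift_pow]
  refine shift_congr n (by ring) (fun j => ?_)
  unfold fSgn
  rw [← Finset.prod_range_reflect (fun t => tauSgn n (j - (m : Fin (n+2)) + (t : Fin (n+2)))) m]
  refine Finset.prod_congr rfl (fun t ht => ?_)
  rw [Finset.mem_range] at ht
  rw [cast_reflect n m t ht]
  congr 1
  ring

/-- Period `m` sink-type equation: if node `i` is a sink of `B(i)` for `i = 1,…,m`,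
then `B` has mutation period `m` iff `τ^m B τ^{−m} = B`. -/
theorem stmt7 (N m : ℕ) (hN : 2 ≤ N) (hm : 1 ≤ m)
    (B : Matrix (Fin N) (Fin N) ℤ) (hskew : Bᵀ = -B)
    (hsink : ∀ i < m, IsSink ⟨i % N, Nat.mod_lt _ (by omega)⟩ (mutChain B i)) :
    mutChain B m = rhoM N ^ m * B * ((rhoM N)⁻¹) ^ m ↔
      tauM N ^ m * B * ((tauM N)⁻¹) ^ m = B := by
  obtain ⟨n, rfl⟩ : ∃ n, N = n + 2 := ⟨N - 2, by omega⟩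
  set M : Fin (n+2) := (m : Fin (n+2)) with hM
  have hchain := chain_formula B hskew hsink m le_rfl
  rw [rho_inv, tau_inv, rho_eq, tau_eq, rho_pow, rho_inv_pow, tau_pow, tau_inv_pow]
  rw [← Matrix.ext_iff, ← Matrix.ext_iff]
  simp only [shift_conj, one_mul, mul_one, ← sub_eq_add_neg]
  constructor
  · intro h i j
    have H : B (i - M) (j - M) = fSgn n m (i - M) * B i j * fSgn n m (j - M) := by
      rw [← h i j, hchain i j, key_sgn' n m i, key_sgn' n m j]
    rw [H]
    have hf := fSgn_sq n m (i - M)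
    have hg := fSgn_sq n m (j - M)
    have : fSgn n m (i - M) * (fSgn n m (i - M) * B i j * fSgn n m (j - M)) * fSgn n m (j - M)
        = (fSgn n m (i - M) * fSgn n m (i - M)) * B i j * (fSgn n m (j - M) * fSgn n m (j - M)) := by
      ring
    rw [this, hf, hg]
    ring
  · intro h i j
    rw [hchain i j, key_sgn' n m i, key_sgn' n m j, ← h i j]
    have hf := fSgn_sq n m (i - M)
    have hg := fSgn_sq n m (j - M)
    have : fSgn n m (i - M) * (fSgn n m (i - M) * B (i - M) (j - M) * fSgn n m (j - M)) * fSgn n m (j - M)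
        = (fSgn n m (i - M) * fSgn n m (i - M)) * B (i - M) (j - M) * (fSgn n m (j - M) * fSgn n m (j - M)) := by
      ring
    rw [this, hf, hg]
    ring
end

section
/- Let B be a 3×3 skew-symmetric integer matrix satisfying μ₂(μ₁(B)) = ρ² B ρ⁻² but μ₁(B) ≠ ρ B ρ⁻¹ (i.e. B is strictly of mutation period 2). Then B = C or B = −C, where C is the matrix with rows (0, −2, 2), (2, 0, −2), (−2, 2, 0). -/
open Matrix

lemma aux_mul_neg_one (x y : ℤ) (h : x * y = -1) : x = 1 ∧ y = -1 ∨ x = -1 ∧ y = 1 := by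
  have hx : IsUnit x := IsUnit.of_mul_eq_one (a := x) (-y) (by linarith [h, mul_neg x y])
  rcases Int.isUnit_iff.mp hx with h1 | h1 <;> subst h1 <;> omega


set_option maxHeartbeats 1000000 in
/-- The only strictly period 2 skew-symmetric 3×3 integer matrices are the 3-cycle of
double arrows and its opposite. -/
theorem stmt11 (B : Matrix (Fin 3) (Fin 3) ℤ) (hskew : Bᵀ = -B)
    (hper : mutB 1 (mutB 0 B) = rhoM 3 ^ 2 * B * ((rhoM 3)⁻¹) ^ 2)
    (hstrict : mutB 0 B ≠ rhoM 3 * B * (rhoM 3)⁻¹) :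
    B = !![0, -2, 2; 2, 0, -2; -2, 2, 0] ∨ B = -!![0, -2, 2; 2, 0, -2; -2, 2, 0] := by
  have hρ : rhoM 3 = !![0,0,1;1,0,0;0,1,0] := by decide
  have hρi : (rhoM 3)⁻¹ = !![0,1,0;0,0,1;1,0,0] := by
    apply Matrix.inv_eq_right_inv; decide
  have hs : ∀ i j, B i j = -B j i := fun i j => by
    have := congrFun (congrFun hskew j) i
    simpa [Matrix.transpose_apply] using this
  have d0 := hs 0 0
  have d1 := hs 1 1
  have d2 := hs 2 2
  obtain ⟨a, b, c, hB⟩ : ∃ a b c, B = !![0, a, b; -a, 0, c; -b, -c, 0] :=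
    ⟨B 0 1, B 0 2, B 1 2, by
      ext i j
      fin_cases i <;> fin_cases j <;>
        simp [hs 1 0, hs 2 0, hs 2 1] <;> omega⟩
  subst hB
  rw [hρi, hρ] at hper hstrict
  have e01 := congrFun (congrFun hper 0) 1
  have e12 := congrFun (congrFun hper 1) 2
  simp [mutB, pow_two, Matrix.mul_apply, Fin.sum_univ_three, Matrix.vecHead, Matrix.vecTail, Function.comp] at e01 e12
  have key : (a = -2 ∧ b = 2 ∧ c = -2) ∨ (a = 2 ∧ b = -2 ∧ c = 2) := by
    rcases abs_cases a with ⟨h1, h2⟩ | ⟨h1, h2⟩ <;>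
      rcases abs_cases b with ⟨h3, h4⟩ | ⟨h3, h4⟩ <;>
      rw [h1, h3] at e12
    · -- a ≥ 0, b ≥ 0
      exfalso
      apply hstrict
      simp at e12
      ext i j
      fin_cases i <;> fin_cases j <;>
        simp [mutB, Matrix.mul_apply, Fin.sum_univ_three, h1, h3, Matrix.vecHead, Matrix.vecTail, Function.comp] <;> omega
    · -- a ≥ 0, b < 0
      simp only [mul_neg, neg_neg] at e12
      generalize hP : a * b = P at e12
      have h6 : P = b - c := by omega
      have h7 : (a - 1) * (b + 1) = -1 := by linear_combination hP + h6 + e01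
      rcases aux_mul_neg_one _ _ h7 with ⟨u, v⟩ | ⟨u, v⟩ <;> omega
    · -- a < 0, b ≥ 0
      simp only [neg_mul] at e12
      generalize hP : a * b = P at e12
      have h6 : P = c - b := by omega
      have h7 : (a + 1) * (b - 1) = -1 := by linear_combination hP + h6 - e01
      rcases aux_mul_neg_one _ _ h7 with ⟨u, v⟩ | ⟨u, v⟩ <;> omega
    · -- a < 0, b < 0
      exfalso
      apply hstrict
      simp only [mul_neg, neg_mul, neg_neg] at e12
      have e12' : -c = -b := by
        generalize hP : a * b = P at e12
        omega
      ext i j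
      fin_cases i <;> fin_cases j <;>
        simp [mutB, Matrix.mul_apply, Fin.sum_univ_three, h1, h3, Matrix.vecHead, Matrix.vecTail, Function.comp] <;> omega
  rcases key with ⟨ha2, hb2, hc2⟩ | ⟨ha2, hb2, hc2⟩ <;> subst ha2 <;> subst hb2 <;> subst hc2
  · left; norm_num
  · right; norm_num
end
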